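/- Let D be a division ring with center F and K a maximal subfield of D that is algebraic of bounded degree n over F, where n is attained and char F does not divide n (in particular this holds if char F = 0). If every element of K \ F is separable over F, then K = F(a) for an element a of degree n, dim_F K = n, and D is finite-dimensional over F. -/
import Mathlib

open Finset in
private def rmap {D : Type*} [DivisionRing D] (a : D) (n : ℕ) (e : ℕ → D) (z : D) : D :=
  ∑ i ∈ Finset.range n, e i * z * a ^ i

section rmaplemmas

variable {D : Type*} [DivisionRing D] (a : D) (n : ℕ)

private lemma rmap_add (e f : ℕ → D) (z : D) :
    rmap a n (fun i => e i + f i) z = rmap a n e z + rmap a n f z := by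
  simp [rmap, add_mul, Finset.sum_add_distrib]

private lemma rmap_sub (e f : ℕ → D) (z : D) :
    rmap a n (fun i => e i - f i) z = rmap a n e z - rmap a n f z := by
  simp [rmap, sub_mul, Finset.sum_sub_distrib]

private lemma rmap_smul (c : D) (e : ℕ → D) (z : D) :
    rmap a n (fun i => c * e i) z = c * rmap a n e z := by
  simp [rmap, Finset.mul_sum, mul_assoc]

private lemma rmap_sum {ι : Type*} (s : Finset ι) (E : ι → ℕ → D) (z : D) :
    rmap a n (fun i => ∑ j ∈ s, E j i) z = ∑ j ∈ s, rmap a n (E j) z := by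
  unfold rmap
  rw [Finset.sum_comm]
  exact Finset.sum_congr rfl fun i _ => by rw [Finset.sum_mul, Finset.sum_mul]

private lemma rmap_one (hn : 0 < n) (z : D) :
    rmap a n (fun i => if i = 0 then 1 else 0) z = z := by
  unfold rmap
  rw [Finset.sum_eq_single 0]
  · simp
  · intro b _ hb; simp [hb]
  · intro h; exact absurd (Finset.mem_range.mpr hn) h

end rmaplemmas

private lemma density {D : Type*} [DivisionRing D] (a : D) (n : ℕ) (hn : 0 < n)
    (hred : ∀ e : ℕ → D, ∃ f : ℕ → D, ∀ z : D, rmap a n f z = rmap a n e z * a) :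
    ∀ m : ℕ, ∀ x : Fin m → D,
      (∀ c : Fin m → D, (∀ j, c j * a = a * c j) → (∑ j, x j * c j) = 0 → ∀ j, c j = 0) →
      ∀ y : Fin m → D, ∃ e : ℕ → D, ∀ j, rmap a n e (x j) = y j := by
  intro m
  induction m with
  | zero => exact fun x _ y => ⟨0, fun j => j.elim0⟩
  | succ m IH =>
    intro x hx y
    -- independence for the initial segment
    have hx' : ∀ c : Fin m → D, (∀ j, c j * a = a * c j) →
        (∑ j, x j.castSucc * c j) = 0 → ∀ j, c j = 0 := by
      intro c hc hsum j
      have h0 : ∀ j : Fin (m+1), (if h : (j : ℕ) < m then c ⟨j, h⟩ else 0) = 0 := by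
        refine hx _ ?_ ?_
        · intro j
          by_cases h : (j : ℕ) < m <;> simp [h, hc]
        · rw [Fin.sum_univ_castSucc]
          have : ((Fin.last m : Fin (m+1)) : ℕ) = m := rfl
          simp only [this, lt_irrefl, dif_neg, not_false_iff, mul_zero, add_zero]
          rw [← hsum]
          refine Finset.sum_congr rfl fun j _ => ?_
          have hj : ((j.castSucc : Fin (m+1)) : ℕ) < m := j.isLt
          simp [hj]
      have := h0 j.castSucc
      simpa [j.isLt] using this
    by_cases hex : ∃ v : D, v ≠ 0 ∧ ∃ e : ℕ → D,
        (∀ j : Fin m, rmap a n e (x j.castSucc) = 0) ∧ rmap a n e (x (Fin.last m)) = v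
    · -- annihilator hits everything
      obtain ⟨v, hv0, e, hekill, hev⟩ := hex
      have hall : ∀ u : D, ∃ e : ℕ → D,
          (∀ j : Fin m, rmap a n e (x j.castSucc) = 0) ∧ rmap a n e (x (Fin.last m)) = u := by
        intro u
        refine ⟨fun i => (u * v⁻¹) * e i, fun j => ?_, ?_⟩
        · rw [rmap_smul, hekill, mul_zero]
        · rw [rmap_smul, hev, mul_assoc, inv_mul_cancel₀ hv0, mul_one]
      obtain ⟨e₁, he₁⟩ := IH (fun j => x j.castSucc) hx' (fun j => y j.castSucc)
      obtain ⟨e₂, hk₂, hv₂⟩ := hall (y (Fin.last m) - rmap a n e₁ (x (Fin.last m)))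
      refine ⟨fun i => e₁ i + e₂ i, fun j => ?_⟩
      refine Fin.lastCases ?_ ?_ j
      · rw [rmap_add, hv₂, add_sub_cancel]
      · intro i
        rw [rmap_add, he₁ i, hk₂ i, add_zero]
    · -- annihilator is zero; derive a contradiction with independence
      exfalso
      have hnone : ∀ u : D, (∃ e : ℕ → D,
          (∀ j : Fin m, rmap a n e (x j.castSucc) = 0) ∧ rmap a n e (x (Fin.last m)) = u) →
          u = 0 := by
        intro u hu
        by_contra h0
        exact hex ⟨u, h0, hu⟩
      have hEδ : ∀ j : Fin m, ∃ e : ℕ → D, ∀ l : Fin m,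
          rmap a n e (x l.castSucc) = (if l = j then 1 else 0) :=
        fun j => IH (fun l => x l.castSucc) hx' (fun l => if l = j then 1 else 0)
      choose E hE using hEδ
      set k : Fin m → D := fun j => rmap a n (E j) (x (Fin.last m)) with hk
      have hkcomm : ∀ j, k j * a = a * k j := by
        intro j
        obtain ⟨f, hf⟩ := hred (E j)
        have h1 : ∀ l : Fin m, rmap a n (fun i => f i - a * E j i) (x l.castSucc) = 0 := by
          intro l
          rw [rmap_sub, rmap_smul, hf, hE j l]
          by_cases h : l = j <;> simp [h]
        have h2 := hnone _ ⟨_, h1, rfl⟩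
        rw [rmap_sub, rmap_smul, hf] at h2
        rw [sub_eq_zero] at h2
        exact h2
      have hdep : x (Fin.last m) - (∑ j : Fin m, x j.castSucc * k j) = 0 := by
        have h1 : ∀ l : Fin m, rmap a n
            (fun i => (if i = 0 then 1 else 0) - ∑ j : Fin m, x j.castSucc * E j i)
            (x l.castSucc) = 0 := by
          intro l
          rw [rmap_sub, rmap_one a n hn, rmap_sum]
          have : ∀ j : Fin m, rmap a n (fun i => x j.castSucc * E j i) (x l.castSucc)
              = if l = j then x j.castSucc else 0 := by
            intro j
            rw [rmap_smul, hE j l]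
            by_cases h : l = j <;> simp [h]
          rw [Finset.sum_congr rfl fun j _ => this j]
          simp
        have h2 := hnone _ ⟨_, h1, rfl⟩
        rw [rmap_sub, rmap_one a n hn, rmap_sum] at h2
        have h3 : ∀ j : Fin m, rmap a n (fun i => x j.castSucc * E j i) (x (Fin.last m))
            = x j.castSucc * k j := fun j => rmap_smul a n _ _ _
        rw [Finset.sum_congr rfl fun j _ => h3 j] at h2
        exact h2
      set c : Fin (m+1) → D := fun j => Fin.lastCases (-1) k j with hc
      have hcomm : ∀ j, c j * a = a * c j := by
        intro j
        refine Fin.lastCases ?_ ?_ j <;> simp [hc, hkcomm]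
      have hdep' : x (Fin.last m) = ∑ j : Fin m, x j.castSucc * k j := sub_eq_zero.mp hdep
      have hsum : ∑ j, x j * c j = 0 := by
        rw [Fin.sum_univ_castSucc]
        simp only [hc, Fin.lastCases_castSucc, Fin.lastCases_last, mul_neg_one]
        rw [hdep']
        simp
      have := hx c hcomm hsum (Fin.last m)
      rw [hc] at this
      simp at this
private lemma shift_exists {D : Type*} [DivisionRing D] (a : D) (n : ℕ) (hn : 0 < n)
    (c : ℕ → D) (hcen : ∀ j (z : D), c j * z = z * c j)
    (ha : a ^ n = ∑ j ∈ Finset.range n, c j * a ^ j) (e : ℕ → D) :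
    ∃ f : ℕ → D, ∀ z, rmap a n f z = rmap a n e z * a := by
  classical
  refine ⟨fun j => (if j = 0 then 0 else e (j - 1)) + e (n - 1) * c j, fun z => ?_⟩
  have hrhs : rmap a n e z * a
      = (∑ j ∈ Finset.range n, (if j = 0 then 0 else e (j - 1)) * z * a ^ j)
        + e (n - 1) * z * a ^ n := by
    have h1 : rmap a n e z * a = ∑ i ∈ Finset.range n, e i * z * a ^ (i + 1) := by
      rw [rmap, Finset.sum_mul]
      exact Finset.sum_congr rfl fun i _ => by rw [pow_succ, mul_assoc]
    have h2 : ∑ j ∈ Finset.range (n + 1), (if j = 0 then 0 else e (j - 1)) * z * a ^ j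
        = ∑ i ∈ Finset.range n, e i * z * a ^ (i + 1) := by
      rw [Finset.sum_range_succ']
      simp
    rw [h1, ← h2, Finset.sum_range_succ]
    have hn0 : n ≠ 0 := hn.ne'
    simp [hn0]
  have hlast : e (n - 1) * z * a ^ n
      = ∑ j ∈ Finset.range n, (e (n - 1) * c j) * z * a ^ j := by
    rw [mul_assoc, ha, Finset.mul_sum, Finset.mul_sum]
    refine Finset.sum_congr rfl fun j _ => ?_
    simp only [← mul_assoc]
    rw [mul_assoc (e (n - 1)) z (c j), ← hcen j z, ← mul_assoc]
  rw [hrhs, hlast, rmap, ← Finset.sum_add_distrib]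
  exact Finset.sum_congr rfl fun j _ => by rw [add_mul, add_mul]

private lemma no_indep {D : Type*} [DivisionRing D] (a : D) (n : ℕ) (hn : 0 < n)
    (hred : ∀ e : ℕ → D, ∃ f : ℕ → D, ∀ z : D, rmap a n f z = rmap a n e z * a)
    (x : Fin (n + 1) → D) :
    ∃ c : Fin (n + 1) → D, (∀ j, c j * a = a * c j) ∧ (∑ j, x j * c j) = 0 ∧ ∃ j, c j ≠ 0 := by
  by_contra hcon
  have hx : ∀ c : Fin (n + 1) → D, (∀ j, c j * a = a * c j) → (∑ j, x j * c j) = 0 →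
      ∀ j, c j = 0 := by
    intro c h1 h2 j
    by_contra h3
    exact hcon ⟨c, h1, h2, j, h3⟩
  let Φ : (Fin n → D) →ₗ[D] (Fin (n + 1) → D) :=
    { toFun := fun d j => ∑ i : Fin n, d i * x j * a ^ (i : ℕ)
      map_add' := by
        intro d₁ d₂
        funext j
        simp [add_mul, Finset.sum_add_distrib]
      map_smul' := by
        intro cc d
        funext j
        simp [Finset.mul_sum, mul_assoc, smul_eq_mul] }
  have hsurj : Function.Surjective Φ := by
    intro y
    obtain ⟨e, he⟩ := density a n hn hred (n + 1) x hx y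
    refine ⟨fun i => e (i : ℕ), ?_⟩
    funext j
    show ∑ i : Fin n, e (i : ℕ) * x j * a ^ (i : ℕ) = y j
    rw [Fin.sum_univ_eq_sum_range (fun i => e i * x j * a ^ i)]
    exact he j
  have hrank := LinearMap.rank_le_of_surjective Φ hsurj
  rw [rank_fun', rank_fun'] at hrank
  have := Nat.cast_le.mp hrank
  simp at this

set_option maxHeartbeats 2000000 in
set_option synthInstance.maxHeartbeats 400000 in
/-- Let `D` be a division ring with center `F` and `K` a maximal subfield of `D` that is
algebraic of bounded degree `n` over `F`, with `n` attained by some `a ∈ K` and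
`char F ∤ n`. If every element of `K \ F` is separable over `F`, then `K = F(a)`,
`dim_F K = n`, and `D` is finite dimensional over `F`. -/
theorem stmt16 {D : Type*} [DivisionRing D] (K : Subfield D)
    (hcomm : ∀ x ∈ K, ∀ y ∈ K, x * y = y * x)
    (hmax : ∀ d : D, (∀ x ∈ K, d * x = x * d) → d ∈ K)
    (n : ℕ) (hn : 0 < n)
    (halgK : ∀ a ∈ K, IsAlgebraic (Subring.center D) a)
    (hbdd : ∀ a ∈ K, (minpoly (Subring.center D) a).natDegree ≤ n)
    (a : D) (haK : a ∈ K) (hdeg : (minpoly (Subring.center D) a).natDegree = n)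
    (hchar : ¬(ringChar D ∣ n))
    (hsep : ∀ b ∈ K, b ∉ Subring.center D → (minpoly (Subring.center D) b).Separable) :
    (∀ x ∈ K, x ∈ Subfield.closure ((Subring.center D : Set D) ∪ {a})) ∧
    Module.finrank (Subring.center D)
      (Submodule.span (Subring.center D) (K : Set D)) = n ∧
    FiniteDimensional (Subring.center D) D := by
  classical
  have hFK : ∀ y : D, y ∈ Subring.center D → y ∈ K := fun y hy =>
    hmax y fun x _ => (Subring.mem_center_iff.mp hy x).symm
  letI instFieldK : Field ↥K :=
    { (inferInstance : DivisionRing ↥K) with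
      mul_comm := fun x y => Subtype.ext (hcomm x.1 x.2 y.1 y.2) }
  letI instAlgFK : Algebra ↥(Subring.center D) ↥K := RingHom.toAlgebra
    { toFun := fun f => (⟨f.1, hFK f.1 f.2⟩ : ↥K)
      map_one' := rfl
      map_mul' := fun _ _ => rfl
      map_zero' := rfl
      map_add' := fun _ _ => rfl }
  let φ : ↥K →ₐ[↥(Subring.center D)] D :=
    { toFun := Subtype.val
      map_one' := rfl
      map_mul' := fun _ _ => rfl
      map_zero' := rfl
      map_add' := fun _ _ => rfl
      commutes' := fun _ => rfl }
  have hφ : Function.Injective φ := Subtype.val_injective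
  have hmp : ∀ x : ↥K,
      minpoly (↥(Subring.center D)) x = minpoly (Subring.center D) (x : D) :=
    fun x => (minpoly.algHom_eq φ hφ x).symm
  have hint : ∀ x : ↥K, IsIntegral (↥(Subring.center D)) x := fun x =>
    (isIntegral_algHom_iff φ hφ).mp ((halgK x.1 x.2).isIntegral)
  set a' : ↥K := (⟨a, haK⟩ : ↥K) with ha'
  have ha'int : IsIntegral (↥(Subring.center D)) a' := hint a'
  haveI hFDa : FiniteDimensional (↥(Subring.center D))
      (IntermediateField.adjoin (↥(Subring.center D)) {a'}) :=
    IntermediateField.adjoin.finiteDimensional ha'int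
  have hfr : Module.finrank (↥(Subring.center D))
      (IntermediateField.adjoin (↥(Subring.center D)) {a'}) = n := by
    rw [IntermediateField.adjoin.finrank ha'int, hmp a']
    exact hdeg
  have hsepK : ∀ x : ↥K, (minpoly (↥(Subring.center D)) x).Separable := by
    intro x
    rw [hmp x]
    by_cases hc : (x : D) ∈ Subring.center D
    · have hx : (x : D) = algebraMap (↥(Subring.center D)) D ⟨(x : D), hc⟩ := rfl
      rw [hx, minpoly.eq_X_sub_C]
      exact Polynomial.separable_X_sub_C
    · exact hsep x.1 x.2 hc
  have hadj : ∀ b : ↥K, b ∈ IntermediateField.adjoin (↥(Subring.center D)) {a'} := by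
    intro b
    set M := IntermediateField.adjoin (↥(Subring.center D)) {a'} ⊔
      IntermediateField.adjoin (↥(Subring.center D)) {b} with hMdef
    haveI : FiniteDimensional (↥(Subring.center D))
        (IntermediateField.adjoin (↥(Subring.center D)) {b}) :=
      IntermediateField.adjoin.finiteDimensional (hint b)
    haveI hMfd : FiniteDimensional (↥(Subring.center D)) M :=
      IntermediateField.finiteDimensional_sup _ _
    haveI : Algebra.IsSeparable (↥(Subring.center D)) M := by
      refine ⟨fun x => ?_⟩
      have heq := minpoly.algHom_eq M.val Subtype.val_injective x
      rw [IsSeparable, ← heq]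
      exact hsepK (M.val x)
    obtain ⟨c, hc⟩ := Field.exists_primitive_element (↥(Subring.center D)) M
    have hcint : IsIntegral (↥(Subring.center D)) c :=
      (isIntegral_algHom_iff M.val Subtype.val_injective).mp (hint (c : ↥K))
    have hfrM : Module.finrank (↥(Subring.center D)) M ≤ n := by
      have heqc := minpoly.algHom_eq M.val Subtype.val_injective c
      have h2 : (minpoly (↥(Subring.center D)) c).natDegree ≤ n := by
        rw [← heqc, hmp (M.val c)]
        exact hbdd _ (M.val c).2
      rw [← IntermediateField.finrank_top' (F := ↥(Subring.center D)) (E := M), ← hc,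
        IntermediateField.adjoin.finrank hcint]
      exact h2
    have hle : IntermediateField.adjoin (↥(Subring.center D)) {a'} ≤ M :=
      le_sup_left
    have heqM : IntermediateField.adjoin (↥(Subring.center D)) {a'} = M :=
      IntermediateField.eq_of_le_of_finrank_le hle (by rw [hfr]; exact hfrM)
    rw [heqM, hMdef]
    exact SetLike.le_def.mp le_sup_right (IntermediateField.mem_adjoin_simple_self _ b)
  have htop : IntermediateField.adjoin (↥(Subring.center D)) {a'} = ⊤ :=
    eq_top_iff.mpr fun x _ => hadj x
  -- Goal 1
  have goal1 : ∀ x ∈ K, x ∈ Subfield.closure ((Subring.center D : Set D) ∪ {a}) := by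
    intro x hx
    let T : Subalgebra (↥(Subring.center D)) ↥K :=
      { carrier := {y : ↥K | (y : D) ∈ Subfield.closure ((Subring.center D : Set D) ∪ {a})}
        mul_mem' := fun {y z} hy hz => by
          show ((y * z : ↥K) : D) ∈ Subfield.closure ((Subring.center D : Set D) ∪ {a})
          push_cast
          exact Subfield.mul_mem _ hy hz
        one_mem' := by
          show ((1 : ↥K) : D) ∈ Subfield.closure ((Subring.center D : Set D) ∪ {a})
          push_cast
          exact Subfield.one_mem _
        add_mem' := fun {y z} hy hz => by
          show ((y + z : ↥K) : D) ∈ Subfield.closure ((Subring.center D : Set D) ∪ {a})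
          push_cast
          exact Subfield.add_mem _ hy hz
        zero_mem' := by
          show ((0 : ↥K) : D) ∈ Subfield.closure ((Subring.center D : Set D) ∪ {a})
          push_cast
          exact Subfield.zero_mem _
        algebraMap_mem' := fun f => Subfield.subset_closure (Or.inl f.2) }
    have hTinv : ∀ y ∈ T, y⁻¹ ∈ T := by
      intro y hy
      show ((y⁻¹ : ↥K) : D) ∈ Subfield.closure ((Subring.center D : Set D) ∪ {a})
      push_cast
      exact Subfield.inv_mem _ hy
    let T' : IntermediateField (↥(Subring.center D)) ↥K := T.toIntermediateField hTinv
    have hle : IntermediateField.adjoin (↥(Subring.center D)) {a'} ≤ T' := by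
      apply IntermediateField.adjoin_le_iff.mpr
      intro z hz
      rw [Set.mem_singleton_iff] at hz
      subst hz
      exact Subfield.subset_closure (Or.inr rfl)
    exact hle (hadj (⟨x, hx⟩ : ↥K))
  -- finrank of K over the center
  have hfinK : Module.finrank (↥(Subring.center D)) ↥K = n := by
    rw [htop] at hfr
    rw [← hfr]
    exact (IntermediateField.topEquiv (F := ↥(Subring.center D))
      (E := ↥K)).toLinearEquiv.finrank_eq.symm
  -- Goal 2
  have hsmulFD : ∀ (f : ↥(Subring.center D)) (x : D), f • x = (f : D) * x := fun _ _ => rfl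
  let W : Submodule (↥(Subring.center D)) D :=
    { carrier := (K : Set D)
      add_mem' := fun hx hy => K.add_mem hx hy
      zero_mem' := K.zero_mem
      smul_mem' := fun f x hx => by
        rw [hsmulFD]
        exact K.mul_mem (hFK _ f.2) hx }
  have hWspan : Submodule.span (↥(Subring.center D)) (K : Set D) = W := Submodule.span_eq W
  let eKW : ↥K ≃ₗ[↥(Subring.center D)] ↥W :=
    { toFun := fun x => ⟨x.1, x.2⟩
      invFun := fun x => ⟨x.1, x.2⟩
      map_add' := fun _ _ => rfl
      map_smul' := fun _ _ => rfl
      left_inv := fun _ => rfl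
      right_inv := fun _ => rfl }
  have goal2 : Module.finrank (↥(Subring.center D))
      (Submodule.span (Subring.center D) (K : Set D)) = n := by
    rw [hWspan, ← hfinK]
    exact eKW.finrank_eq.symm
  refine ⟨goal1, goal2, ?_⟩
  -- Goal 3
  have hCa : ∀ d : D, d * a = a * d → d ∈ K := by
    intro d hd
    apply hmax
    intro x hx
    have hxcl := goal1 x hx
    let C : Subfield D :=
      { Subring.centralizer ({d} : Set D) with
        inv_mem' := fun y hy => Set.inv_mem_centralizer₀ hy }
    have hsub : Subfield.closure ((Subring.center D : Set D) ∪ {a}) ≤ C := by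
      rw [Subfield.closure_le]
      rintro z (hz | hz)
      · intro g hg
        rw [Set.mem_singleton_iff] at hg
        subst hg
        exact Subring.mem_center_iff.mp hz g
      · rw [Set.mem_singleton_iff] at hz
        subst hz
        intro g hg
        rw [Set.mem_singleton_iff] at hg
        subst hg
        exact hd
    exact (Subring.mem_centralizer_iff.mp (hsub hxcl) d rfl)
  have hred : ∀ e : ℕ → D, ∃ f : ℕ → D, ∀ z : D, rmap a n f z = rmap a n e z * a := by
    have hamono : (minpoly (Subring.center D) a).Monic :=
      minpoly.monic (halgK a haK).isIntegral
    have haev : Polynomial.aeval a (minpoly (Subring.center D) a) = 0 := minpoly.aeval _ _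
    set c : ℕ → D := fun j =>
      algebraMap (↥(Subring.center D)) D (-((minpoly (Subring.center D) a).coeff j)) with hcdef
    have hcen : ∀ (j : ℕ) (z : D), c j * z = z * c j := fun j z =>
      (Subring.mem_center_iff.mp (-((minpoly (Subring.center D) a).coeff j)).2 z).symm
    have hpow : a ^ n = ∑ j ∈ Finset.range n, c j * a ^ j := by
      have h1 := Polynomial.aeval_eq_sum_range (R := ↥(Subring.center D))
        (S := D) (p := minpoly (Subring.center D) a) a
      rw [haev, hdeg, Finset.sum_range_succ] at h1
      have h2 : (minpoly (Subring.center D) a).coeff n = 1 := by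
        have := hamono.coeff_natDegree
        rwa [hdeg] at this
      rw [h2, one_smul] at h1
      have h3 : a ^ n = -∑ i ∈ Finset.range n, (minpoly (Subring.center D) a).coeff i • a ^ i := by
        rw [eq_neg_iff_add_eq_zero, add_comm]
        exact h1.symm
      rw [h3, ← Finset.sum_neg_distrib]
      refine Finset.sum_congr rfl fun j _ => ?_
      rw [← neg_smul, Algebra.smul_def]
    exact fun e => shift_exists a n hn c hcen hpow e
  letI instSMulKD : SMul ↥K D := ⟨fun k x => x * (k : D)⟩
  have hsmulKD : ∀ (k : ↥K) (x : D), k • x = x * (k : D) := fun _ _ => rfl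
  letI instModKD : Module ↥K D :=
    { one_smul := fun x => mul_one x
      mul_smul := fun k l x => by
        rw [hsmulKD, hsmulKD, hsmulKD]
        push_cast
        rw [hcomm k.1 k.2 l.1 l.2, mul_assoc]
      smul_zero := fun k => zero_mul _
      smul_add := fun k x y => add_mul x y _
      add_smul := fun k l x => by
        rw [hsmulKD, hsmulKD, hsmulKD]
        push_cast
        rw [mul_add]
      zero_smul := fun x => mul_zero x }
  haveI hKD : FiniteDimensional ↥K D := by
    have hr : Module.rank ↥K D ≤ n := by
      apply rank_le
      intro s hs
      by_contra hcard
      push_neg at hcard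
      have hcard' : Fintype.card (Fin (n + 1)) ≤ Fintype.card s := by
        rw [Fintype.card_fin, Fintype.card_coe]
        omega
      obtain ⟨f⟩ := Function.Embedding.nonempty_of_card_le hcard'
      have hli : LinearIndependent ↥K (fun i : Fin (n + 1) => ((f i : D))) :=
        hs.comp f f.injective
      obtain ⟨c, hc1, hc2, j, hj⟩ := no_indep a n hn hred (fun i => ((f i : D) : D))
      have hzero := Fintype.linearIndependent_iff.mp hli
        (fun i => (⟨c i, hCa _ (hc1 i)⟩ : ↥K)) (by
          rw [← hc2]
          exact Finset.sum_congr rfl fun i _ => rfl) j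
      exact hj (congrArg Subtype.val hzero)
    exact Module.rank_lt_aleph0_iff.mp (lt_of_le_of_lt hr (Cardinal.nat_lt_aleph0 n))
  haveI hFKfd : FiniteDimensional (↥(Subring.center D)) ↥K := by
    rw [htop] at hFDa
    exact (IntermediateField.topEquiv (F := ↥(Subring.center D))
      (E := ↥K)).toLinearEquiv.finiteDimensional
  haveI : IsScalarTower (↥(Subring.center D)) ↥K D := by
    constructor
    intro f k x
    show (f • k) • x = f • (k • x)
    rw [hsmulKD (f • k) x, hsmulKD k x, hsmulFD f (x * (k : D))]
    have h1 : ((f • k : ↥K) : D) = (f : D) * (k : D) := rfl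
    rw [h1, ← mul_assoc, Subring.mem_center_iff.mp f.2 x, mul_assoc]
  exact Module.Finite.trans ↥K D
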